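/- Let f : 2^V → ℝ≥0 be monotone and submodular, let S_b ⊆ V be any set, and let S_{k−b} be obtained from S_b by k−b greedy steps (maximizing marginal gain over V \ current set). Then for any set S° with |S°| ≤ k, f(S_b ∪ S_{k−b}) ≥ (1 − (1 − 1/k)^{k−b}) · f(S°) + (1 − 1/k)^{k−b} · f(S_b). -/

import Mathlib

lemma submod_sum' {V : Type*} [DecidableEq V] (f : Finset V → ℝ)
    (hsub : ∀ S T : Finset V, S ⊆ T → ∀ v : V,
      f (insert v S) - f S ≥ f (insert v T) - f T)
    (A : Finset V) (S : Finset V) :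
    f (S ∪ A) - f A ≤ ∑ v ∈ S, (f (insert v A) - f A) := by
  induction S using Finset.induction with
  | empty => simp
  | @insert x S hx ih =>
    have h1 : f (insert x A) - f A ≥ f (insert x (S ∪ A)) - f (S ∪ A) :=
      hsub A (S ∪ A) Finset.subset_union_right x
    rw [Finset.insert_union, Finset.sum_insert hx]
    linarith

/-- Greedy continuation guarantee: starting from any `S_b` and performing `k − b` greedy
steps, `f(S_b ∪ S_{k−b}) ≥ (1 − (1 − 1/k)^{k−b})·f(S°) + (1 − 1/k)^{k−b}·f(S_b)`. -/
theorem greedy_continuation_guarantee {V : Type*} [Fintype V] [DecidableEq V]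
    (f : Finset V → ℝ) (k b : ℕ) (hk : 1 ≤ k) (hb : b ≤ k)
    (hmono : ∀ S T : Finset V, S ⊆ T → f S ≤ f T)
    (hsub : ∀ S T : Finset V, S ⊆ T → ∀ v : V,
      f (insert v S) - f S ≥ f (insert v T) - f T)
    (Sb : Finset V) (T : ℕ → Finset V) (h0 : T 0 = Sb)
    (hgreedy : ∀ a < k - b, ∃ v : V, v ∉ T a ∧ T (a + 1) = insert v (T a) ∧
      ∀ u : V, f (insert u (T a)) - f (T a) ≤ f (insert v (T a)) - f (T a))
    (Sopt : Finset V) (hcard : Sopt.card ≤ k) :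
    f (T (k - b)) ≥ (1 - (1 - 1 / (k : ℝ)) ^ (k - b)) * f Sopt +
      (1 - 1 / (k : ℝ)) ^ (k - b) * f Sb := by
  have hk0 : (0:ℝ) < k := by exact_mod_cast hk
  have hq : (0:ℝ) ≤ 1 - 1/k := by
    rw [sub_nonneg, div_le_one hk0]
    exact_mod_cast hk
  have key : ∀ a, a ≤ k - b →
      f Sopt - f (T a) ≤ (1 - 1/(k:ℝ))^a * (f Sopt - f Sb) := by
    intro a
    induction a with
    | zero => intro _; simp [h0]
    | succ a ih =>
      intro ha
      have ha' : a < k - b := Nat.lt_of_succ_le ha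
      have ihh := ih (Nat.le_of_lt ha')
      obtain ⟨v, hv, hT, hmax⟩ := hgreedy a ha'
      have hsum := submod_sum' f hsub (T a) Sopt
      have hbound : ∑ u ∈ Sopt, (f (insert u (T a)) - f (T a)) ≤
          (Sopt.card : ℝ) * (f (insert v (T a)) - f (T a)) := by
        calc ∑ u ∈ Sopt, (f (insert u (T a)) - f (T a))
            ≤ ∑ _u ∈ Sopt, (f (insert v (T a)) - f (T a)) :=
              Finset.sum_le_sum (fun u _ => hmax u)
          _ = (Sopt.card : ℝ) * (f (insert v (T a)) - f (T a)) := by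
              rw [Finset.sum_const, nsmul_eq_mul]
      have hgain0 : 0 ≤ f (insert v (T a)) - f (T a) := by
        have := hmono (T a) (insert v (T a)) (Finset.subset_insert _ _)
        linarith
      have hck : (Sopt.card : ℝ) ≤ k := by exact_mod_cast hcard
      have h1 : f Sopt ≤ f (Sopt ∪ T a) := hmono _ _ Finset.subset_union_left
      have h2 : f Sopt - f (T a) ≤ (k:ℝ) * (f (T (a+1)) - f (T a)) := by
        rw [hT]
        nlinarith [mul_le_mul_of_nonneg_right hck hgain0]
      have h2' : (f Sopt - f (T a)) / k ≤ f (T (a+1)) - f (T a) := by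
        rw [div_le_iff₀ hk0]; linarith
      have heq : (1 - 1/(k:ℝ)) * (f Sopt - f (T a)) =
          (f Sopt - f (T a)) - (f Sopt - f (T a)) / k := by
        field_simp
      have h3 : f Sopt - f (T (a+1)) ≤ (1 - 1/(k:ℝ)) * (f Sopt - f (T a)) := by
        rw [heq]; linarith
      calc f Sopt - f (T (a+1)) ≤ (1 - 1/(k:ℝ)) * (f Sopt - f (T a)) := h3
        _ ≤ (1 - 1/(k:ℝ)) * ((1 - 1/(k:ℝ))^a * (f Sopt - f Sb)) :=
            mul_le_mul_of_nonneg_left ihh hq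
        _ = (1 - 1/(k:ℝ))^(a+1) * (f Sopt - f Sb) := by ring
  have hfin := key (k - b) le_rfl
  nlinarith [hfin]
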